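/- arXiv:2006.04797 — 6 statements merged into one kernel-verified Lean document; each statement's English description precedes it below -/
import Mathlib

section
/- Let (X, F, 𝔅, ν) be a Renyi space and fix B₀ ∈ 𝔅. For B ∈ 𝔅 define m(B) = ν(B | B₀ ∪ B)/ν(B₀ | B₀ ∪ B) (the denominator is positive since B₀ ⊆ B₀ ∪ B ∈ 𝔅). Then for all B₁, B₂ ∈ 𝔅 and every measurable set A with A ⊆ B₁ ∩ B₂, one has ν(A | B₁)·m(B₁) = ν(A | B₂)·m(B₂); i.e., the extension μ(A) := ν(A | B)·m(B) for measurable A ⊆ B ∈ 𝔅 does not depend on the choice of B. -/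
open MeasureTheory
open scoped ENNReal

/-- A Renyi (conditional probability) space on a measurable space `X`: a bunch
`𝔅` of measurable sets together with probability measures `cond B = ν(· | B)`
for `B ∈ 𝔅`, satisfying the Renyi axioms. -/
structure RenyiSpace (X : Type*) [MeasurableSpace X] where
  bunch : Set (Set X)
  cond : Set X → Measure X
  bunch_measurableSet : ∀ B ∈ bunch, MeasurableSet B
  bunch_union : ∀ B₁ ∈ bunch, ∀ B₂ ∈ bunch, B₁ ∪ B₂ ∈ bunch
  bunch_cover : ∃ B : ℕ → Set X, (∀ i, B i ∈ bunch) ∧ (⋃ i, B i) = Set.univ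
  empty_not_mem : ∅ ∉ bunch
  isProbabilityMeasure : ∀ B ∈ bunch, IsProbabilityMeasure (cond B)
  pos : ∀ B₁ ∈ bunch, ∀ B₂ ∈ bunch, B₁ ⊆ B₂ → 0 < cond B₂ B₁
  renyi : ∀ B₁ ∈ bunch, ∀ B₂ ∈ bunch, B₁ ⊆ B₂ →
    ∀ A : Set X, MeasurableSet A →
      cond B₁ A = cond B₂ (A ∩ B₁) / cond B₂ B₁

/-- The normalizing function `m(B) = ν(B | B₀ ∪ B) / ν(B₀ | B₀ ∪ B)` used in
the construction of the measure generated by a Renyi space. -/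
noncomputable def RenyiSpace.mFun {X : Type*} [MeasurableSpace X]
    (R : RenyiSpace X) (B₀ B : Set X) : ℝ≥0∞ :=
  R.cond (B₀ ∪ B) B / R.cond (B₀ ∪ B) B₀

lemma renyi_key {X : Type*} [MeasurableSpace X] (R : RenyiSpace X)
    (B₀ : Set X) (hB₀ : B₀ ∈ R.bunch) (B : Set X) (hB : B ∈ R.bunch)
    (C : Set X) (hC : C ∈ R.bunch) (hBC : B₀ ∪ B ⊆ C)
    (A : Set X) (hA : MeasurableSet A) (hAB : A ⊆ B) :
    R.cond B A * R.mFun B₀ B = R.cond C A / R.cond C B₀ := by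
  have hU : B₀ ∪ B ∈ R.bunch := R.bunch_union B₀ hB₀ B hB
  have hBC' : B ⊆ C := (Set.subset_union_right).trans hBC
  have hB0C : B₀ ⊆ C := (Set.subset_union_left).trans hBC
  have hmB := R.bunch_measurableSet B hB
  have hmB0 := R.bunch_measurableSet B₀ hB₀
  have hprob := R.isProbabilityMeasure C hC
  -- abbreviations
  set a := R.cond C A with ha
  set b := R.cond C B with hb
  set c := R.cond C B₀ with hc
  set d := R.cond C (B₀ ∪ B) with hd
  have hbpos : b ≠ 0 := (R.pos B hB C hC hBC').ne'
  have hcpos : c ≠ 0 := (R.pos B₀ hB₀ C hC hB0C).ne'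
  have hdpos : d ≠ 0 := (R.pos (B₀ ∪ B) hU C hC hBC).ne'
  have hbne : b ≠ ⊤ := measure_ne_top _ _
  have hcne : c ≠ ⊤ := measure_ne_top _ _
  have hdne : d ≠ ⊤ := measure_ne_top _ _
  have h1 : R.cond B A = a / b := by
    have := R.renyi B hB C hC hBC' A hA
    rwa [Set.inter_eq_self_of_subset_left hAB] at this
  have h2 : R.cond (B₀ ∪ B) B = b / d := by
    have := R.renyi (B₀ ∪ B) hU C hC hBC B hmB
    rwa [Set.inter_eq_self_of_subset_left Set.subset_union_right] at this
  have h3 : R.cond (B₀ ∪ B) B₀ = c / d := by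
    have := R.renyi (B₀ ∪ B) hU C hC hBC B₀ hmB0
    rwa [Set.inter_eq_self_of_subset_left Set.subset_union_left] at this
  rw [RenyiSpace.mFun, h1, h2, h3]
  rw [div_eq_mul_inv, div_eq_mul_inv, div_eq_mul_inv, div_eq_mul_inv,
    ENNReal.mul_inv (Or.inl hcpos) (Or.inl hcne), inv_inv]
  rw [show a * b⁻¹ * (b * d⁻¹ * (c⁻¹ * d)) = a * c⁻¹ * (b⁻¹ * b) * (d⁻¹ * d) from by
    ring]
  rw [ENNReal.inv_mul_cancel hbpos hbne, ENNReal.inv_mul_cancel hdpos hdne,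
    mul_one, mul_one]
  exact (div_eq_mul_inv a c).symm

/-- In a Renyi space, with `B₀ ∈ 𝔅` fixed and
`m(B) = ν(B | B₀ ∪ B) / ν(B₀ | B₀ ∪ B)`, for all `B₁, B₂ ∈ 𝔅` and every
measurable `A ⊆ B₁ ∩ B₂` one has `ν(A | B₁)·m(B₁) = ν(A | B₂)·m(B₂)`: the
extension `μ(A) := ν(A | B)·m(B)` does not depend on the choice of `B`. -/
theorem stmt_11 {X : Type*} [MeasurableSpace X] (R : RenyiSpace X)
    (B₀ : Set X) (hB₀ : B₀ ∈ R.bunch) :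
    ∀ B₁ ∈ R.bunch, ∀ B₂ ∈ R.bunch,
      ∀ A : Set X, MeasurableSet A → A ⊆ B₁ ∩ B₂ →
        R.cond B₁ A * R.mFun B₀ B₁ = R.cond B₂ A * R.mFun B₀ B₂ := by
  intro B₁ hB₁ B₂ hB₂ A hA hAB
  set C := B₀ ∪ B₁ ∪ B₂ with hCdef
  have hC : C ∈ R.bunch := R.bunch_union _ (R.bunch_union B₀ hB₀ B₁ hB₁) B₂ hB₂
  have h1 : B₀ ∪ B₁ ⊆ C := Set.subset_union_left
  have h2 : B₀ ∪ B₂ ⊆ C :=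
    Set.union_subset (Set.subset_union_left.trans Set.subset_union_left)
      Set.subset_union_right
  rw [renyi_key R B₀ hB₀ B₁ hB₁ C hC h1 A hA (hAB.trans Set.inter_subset_left),
    renyi_key R B₀ hB₀ B₂ hB₂ C hC h2 A hA (hAB.trans Set.inter_subset_right)]
end

section
/- (Structure theorem, existence.) Let (X, F, 𝔅, ν) be a Renyi space. Then there exists a σ-finite measure μ on (X, F) such that every B ∈ 𝔅 satisfies 0 < μ(B) < ∞ and ν(A | B) = μ(A ∩ B)/μ(B) for all A ∈ F and all B ∈ 𝔅. Hence every Renyi space is generated by a conditional measure space. -/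
open MeasureTheory
open scoped ENNReal

namespace RenyiSpace

variable {X : Type*} [MeasurableSpace X] (R : RenyiSpace X)

lemma cond_le_one {B : Set X} (hB : B ∈ R.bunch) (A : Set X) : R.cond B A ≤ 1 := by
  have := R.isProbabilityMeasure B hB
  exact prob_le_one

lemma cond_ne_top {B : Set X} (hB : B ∈ R.bunch) (A : Set X) : R.cond B A ≠ ⊤ :=
  ((R.cond_le_one hB A).trans_lt ENNReal.one_lt_top).ne

/-- `ν(B | B) = 1`. -/
lemma cond_self {B : Set X} (hB : B ∈ R.bunch) : R.cond B B = 1 := by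
  have hBm := R.bunch_measurableSet B hB
  have h0 : R.cond B Bᶜ = 0 := by
    have := R.renyi B hB B hB subset_rfl Bᶜ hBm.compl
    simpa [Set.compl_inter_self] using this
  have := measure_add_measure_compl (μ := R.cond B) hBm
  have h1 : R.cond B Set.univ = 1 := by
    have := R.isProbabilityMeasure B hB
    simp
  rw [h0, add_zero, h1] at this
  exact this

/-- Multiplicative form of the Renyi axiom. -/
lemma cond_mul {B₁ B₂ : Set X} (h₁ : B₁ ∈ R.bunch) (h₂ : B₂ ∈ R.bunch)
    (hsub : B₁ ⊆ B₂) {A : Set X} (hA : MeasurableSet A) :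
    R.cond B₂ (A ∩ B₁) = R.cond B₂ B₁ * R.cond B₁ A := by
  have h := R.renyi B₁ h₁ B₂ h₂ hsub A hA
  have hne0 : R.cond B₂ B₁ ≠ 0 := (R.pos B₁ h₁ B₂ h₂ hsub).ne'
  have hnetop : R.cond B₂ B₁ ≠ ⊤ := R.cond_ne_top h₂ B₁
  rw [h, ENNReal.mul_div_cancel hne0 hnetop]

end RenyiSpace

/-- Structure theorem, existence: every Renyi space is generated
by a σ-finite measure: there is a σ-finite `μ` such that each `B ∈ 𝔅` is
admissible for `μ` and `ν(A | B) = μ (A ∩ B) / μ B` for all measurable `A`. -/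
theorem stmt_12 {X : Type*} [MeasurableSpace X] (R : RenyiSpace X) :
    ∃ μ : Measure X, SigmaFinite μ ∧
      ∀ B ∈ R.bunch, (0 < μ B ∧ μ B < ⊤) ∧
        ∀ A : Set X, MeasurableSet A → R.cond B A = μ (A ∩ B) / μ B := by
  classical
  obtain ⟨G, hG, hGcov⟩ := R.bunch_cover
  -- increasing covering sequence in the bunch
  set C : ℕ → Set X := fun n => Nat.rec (G 0) (fun n Cn => Cn ∪ G (n + 1)) n with hC
  have hCsucc : ∀ n, C (n + 1) = C n ∪ G (n + 1) := fun n => rfl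
  have hCmem : ∀ n, C n ∈ R.bunch := by
    intro n
    induction n with
    | zero => exact hG 0
    | succ n ih => exact R.bunch_union _ ih _ (hG (n + 1))
  have hCm : ∀ n, MeasurableSet (C n) := fun n => R.bunch_measurableSet _ (hCmem n)
  have hCmono : Monotone C := by
    have : ∀ n, C n ⊆ C (n + 1) := fun n => by rw [hCsucc]; exact Set.subset_union_left
    exact monotone_nat_of_le_succ this
  have hGC : ∀ n, G n ⊆ C n := by
    intro n
    cases n with
    | zero => exact subset_rfl
    | succ n => rw [hCsucc]; exact Set.subset_union_right
  have hCcov : (⋃ n, C n) = Set.univ := by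
    apply Set.eq_univ_of_univ_subset
    rw [← hGcov]
    exact Set.iUnion_mono hGC
  -- disjointification
  set D : ℕ → Set X := disjointed C with hD
  have hDm : ∀ n, MeasurableSet (D n) := MeasurableSet.disjointed hCm
  have hDsub : ∀ n, D n ⊆ C n := disjointed_subset C
  have hDcov : (⋃ n, D n) = Set.univ := by rw [hD, iUnion_disjointed, hCcov]
  have hDdisj : Pairwise (Function.onFun Disjoint D) := disjoint_disjointed C
  -- the measure
  set μ : Measure X :=
    Measure.sum (fun n => ((R.cond (C n) (C 0))⁻¹ • R.cond (C n)).restrict (D n)) with hμ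
  have hμapp : ∀ {S : Set X}, MeasurableSet S →
      μ S = ∑' n, (R.cond (C n) (C 0))⁻¹ * R.cond (C n) (S ∩ D n) := by
    intro S hS
    rw [hμ, Measure.sum_apply _ hS]
    congr 1
    ext n
    rw [Measure.restrict_apply hS, Measure.smul_apply, smul_eq_mul]
  -- key formula
  have key : ∀ B ∈ R.bunch, ∀ A : Set X, MeasurableSet A →
      μ (A ∩ B) = (R.cond (B ∪ C 0) B / R.cond (B ∪ C 0) (C 0)) * R.cond B A := by
    intro B hB A hA
    have hBm := R.bunch_measurableSet B hB
    set E : ℕ → Set X := fun n => B ∪ C n with hE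
    have hEmem : ∀ n, E n ∈ R.bunch := fun n => R.bunch_union B hB _ (hCmem n)
    have hBE : ∀ n, B ⊆ E n := fun n => Set.subset_union_left
    have hCE : ∀ n, C n ⊆ E n := fun n => Set.subset_union_right
    have hC0Cn : ∀ n, C 0 ⊆ C n := fun n => hCmono (Nat.zero_le n)
    have hE0En : ∀ n, E 0 ⊆ E n := fun n => Set.union_subset_union_right _ (hC0Cn n)
    set r : ℝ≥0∞ := R.cond (E 0) B / R.cond (E 0) (C 0) with hr
    -- term-by-term computation
    have hterm : ∀ n, (R.cond (C n) (C 0))⁻¹ * R.cond (C n) ((A ∩ B) ∩ D n)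
        = r * R.cond B (A ∩ D n) := by
      intro n
      have hABD : MeasurableSet (A ∩ B ∩ D n) := (hA.inter hBm).inter (hDm n)
      have h1 : R.cond (E n) (A ∩ B ∩ D n) = R.cond (E n) (C n) * R.cond (C n) (A ∩ B ∩ D n) := by
        have := R.cond_mul (hCmem n) (hEmem n) (hCE n) hABD
        rwa [Set.inter_eq_left.mpr ((Set.inter_subset_right).trans (hDsub n))] at this
      have h2 : R.cond (E n) (C 0) = R.cond (E n) (C n) * R.cond (C n) (C 0) := by
        have := R.cond_mul (hCmem n) (hEmem n) (hCE n) (hCm 0)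
        rwa [Set.inter_eq_left.mpr (hC0Cn n)] at this
      have h3 : R.cond (E n) (A ∩ B ∩ D n) = R.cond (E n) B * R.cond B (A ∩ D n) := by
        have := R.cond_mul hB (hEmem n) (hBE n) (hA.inter (hDm n))
        rw [← this]
        congr 1
        ext x; simp [and_comm, and_assoc]
      have h4 : R.cond (E n) B = R.cond (E n) (E 0) * R.cond (E 0) B := by
        have := R.cond_mul (hEmem 0) (hEmem n) (hE0En n) (R.bunch_measurableSet B hB)
        rwa [Set.inter_eq_left.mpr (hBE 0)] at this
      have h5 : R.cond (E n) (C 0) = R.cond (E n) (E 0) * R.cond (E 0) (C 0) := by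
        have := R.cond_mul (hEmem 0) (hEmem n) (hE0En n) (hCm 0)
        rwa [Set.inter_eq_left.mpr ((hC0Cn 0).trans (hCE 0))] at this
      -- pass to the reals
      set a := R.cond (E n) (C n)
      set b := R.cond (E n) (C 0)
      set c := R.cond (E n) B
      set e := R.cond (E n) (E 0)
      set p := R.cond (E 0) B
      set q := R.cond (E 0) (C 0)
      set x := R.cond B (A ∩ D n)
      set y := R.cond (C n) (A ∩ B ∩ D n)
      set z := R.cond (C n) (C 0)
      have ha0 : a ≠ 0 := (R.pos _ (hCmem n) _ (hEmem n) (hCE n)).ne'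
      have hb0 : b ≠ 0 := (R.pos _ (hCmem 0) _ (hEmem n) ((hC0Cn n).trans (hCE n))).ne'
      have he0 : e ≠ 0 := (R.pos _ (hEmem 0) _ (hEmem n) (hE0En n)).ne'
      have hq0 : q ≠ 0 := (R.pos _ (hCmem 0) _ (hEmem 0) ((hC0Cn 0).trans (hCE 0))).ne'
      have hz0 : z ≠ 0 := (R.pos _ (hCmem 0) _ (hCmem n) (hC0Cn n)).ne'
      have hat : a ≠ ⊤ := R.cond_ne_top (hEmem n) _
      have hbt : b ≠ ⊤ := R.cond_ne_top (hEmem n) _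
      have hct : c ≠ ⊤ := R.cond_ne_top (hEmem n) _
      have het : e ≠ ⊤ := R.cond_ne_top (hEmem n) _
      have hpt : p ≠ ⊤ := R.cond_ne_top (hEmem 0) _
      have hqt : q ≠ ⊤ := R.cond_ne_top (hEmem 0) _
      have hxt : x ≠ ⊤ := R.cond_ne_top hB _
      have hyt : y ≠ ⊤ := R.cond_ne_top (hCmem n) _
      have hzt : z ≠ ⊤ := R.cond_ne_top (hCmem n) _
      -- h1 : R.cond (E n) (A ∩ B ∩ D n) = a * y, h3 : ... = c * x
      have hcx : a * y = c * x := by rw [← h1, h3]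
      -- h2 : b = a * z
      have hb : b = a * z := h2
      have hc : c = e * p := h4
      have hbq : b = e * q := h5
      -- goal: z⁻¹ * y = (p / q) * x
      show z⁻¹ * y = p / q * x
      have hzb : z = b / a := by
        rw [hb, mul_comm, mul_div_assoc, ENNReal.div_self ha0 hat, mul_one]
      -- multiply out: prove equality after clearing denominators
      rw [hzb]
      rw [ENNReal.inv_div (Or.inl hat) (Or.inl ha0)]
      -- now : a / b * y = p / q * x
      rw [mul_comm, ← mul_div_assoc, mul_comm (p / q) x, ← mul_div_assoc,
        ENNReal.div_eq_div_iff hq0 hqt hb0 hbt]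
      calc q * (y * a) = q * (a * y) := by ring
        _ = q * (c * x) := by rw [hcx]
        _ = q * (e * p * x) := by rw [hc]
        _ = e * q * (x * p) := by ring
        _ = b * (x * p) := by rw [hbq]
    have hmeasAB : MeasurableSet (A ∩ B) := hA.inter hBm
    rw [hμapp hmeasAB]
    have : ∀ n, (R.cond (C n) (C 0))⁻¹ * R.cond (C n) ((A ∩ B) ∩ D n)
        = r * R.cond B (A ∩ D n) := hterm
    rw [tsum_congr this, ENNReal.tsum_mul_left]
    congr 1
    -- ∑' n, cond B (A ∩ D n) = cond B A
    have hmeas : ∀ n, MeasurableSet (A ∩ D n) := fun n => hA.inter (hDm n)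
    have hdisj : Pairwise (Function.onFun Disjoint fun n => A ∩ D n) := by
      intro i j hij
      exact ((hDdisj hij).mono Set.inter_subset_right Set.inter_subset_right)
    have := measure_iUnion (μ := R.cond B) hdisj hmeas
    rw [← this, ← Set.inter_iUnion, hDcov, Set.inter_univ]
  -- conclusions
  have hBval : ∀ B ∈ R.bunch, μ B = R.cond (B ∪ C 0) B / R.cond (B ∪ C 0) (C 0) := by
    intro B hB
    have := key B hB Set.univ MeasurableSet.univ
    have hprob := R.isProbabilityMeasure B hB
    simpa [Set.univ_inter] using this
  have hrpos : ∀ B ∈ R.bunch, 0 < R.cond (B ∪ C 0) B / R.cond (B ∪ C 0) (C 0) := by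
    intro B hB
    have hmem : B ∪ C 0 ∈ R.bunch := R.bunch_union B hB _ (hCmem 0)
    exact ENNReal.div_pos (R.pos B hB _ hmem Set.subset_union_left).ne'
      (R.cond_ne_top hmem _)
  have hrfin : ∀ B ∈ R.bunch, R.cond (B ∪ C 0) B / R.cond (B ∪ C 0) (C 0) < ⊤ := by
    intro B hB
    have hmem : B ∪ C 0 ∈ R.bunch := R.bunch_union B hB _ (hCmem 0)
    exact ENNReal.div_lt_top (R.cond_ne_top hmem _)
      (R.pos _ (hCmem 0) _ hmem Set.subset_union_right).ne'
  refine ⟨μ, ?_, ?_⟩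
  · -- σ-finiteness via the C n
    refine ⟨⟨⟨fun n => C n, fun _ => trivial, fun n => ?_, hCcov⟩⟩⟩
    rw [hBval _ (hCmem n)]
    exact hrfin _ (hCmem n)
  · intro B hB
    refine ⟨⟨?_, ?_⟩, ?_⟩
    · rw [hBval B hB]; exact hrpos B hB
    · rw [hBval B hB]; exact hrfin B hB
    · intro A hA
      rw [key B hB A hA, hBval B hB]
      set r := R.cond (B ∪ C 0) B / R.cond (B ∪ C 0) (C 0)
      rw [mul_comm, mul_div_assoc, ENNReal.div_self (hrpos B hB).ne' (hrfin B hB).ne,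
        mul_one]
end

section
/- (Structure theorem, uniqueness.) Let 𝔅 be a bunch in a measurable space (X, F), and let μ and μ′ be σ-finite measures on (X, F) such that every B ∈ 𝔅 is admissible for both (0 < μ(B) < ∞ and 0 < μ′(B) < ∞) and μ(A ∩ B)/μ(B) = μ′(A ∩ B)/μ′(B) for all A ∈ F and all B ∈ 𝔅. Then there exists c ∈ (0,∞) with μ′ = c·μ; i.e., the σ-finite measure generated by a Renyi space is unique up to a positive multiplicative constant. -/
open MeasureTheory
open scoped ENNReal

set_option maxHeartbeats 800000

/-- Structure theorem, uniqueness: if `𝔅` is a bunch (a family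
of measurable sets closed under binary unions, covering `X` by a countable
subfamily, and not containing `∅`), and `μ, μ'` are σ-finite measures for
which every `B ∈ 𝔅` is admissible and which have the same elementary
conditional probabilities given each `B ∈ 𝔅`, then `μ' = c • μ` for some
`c ∈ (0,∞)`. -/
theorem stmt_13 {X : Type*} [MeasurableSpace X] (𝔅 : Set (Set X))
    (h_meas : ∀ B ∈ 𝔅, MeasurableSet B)
    (h_union : ∀ B₁ ∈ 𝔅, ∀ B₂ ∈ 𝔅, B₁ ∪ B₂ ∈ 𝔅)
    (h_cover : ∃ B : ℕ → Set X, (∀ i, B i ∈ 𝔅) ∧ (⋃ i, B i) = Set.univ)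
    (h_empty : ∅ ∉ 𝔅)
    (μ μ' : Measure X) (hμ : SigmaFinite μ) (hμ' : SigmaFinite μ')
    (hadm : ∀ B ∈ 𝔅, (0 < μ B ∧ μ B < ⊤) ∧ (0 < μ' B ∧ μ' B < ⊤))
    (hcond : ∀ B ∈ 𝔅, ∀ A : Set X, MeasurableSet A →
      μ (A ∩ B) / μ B = μ' (A ∩ B) / μ' B) :
    ∃ c : ℝ≥0∞, 0 < c ∧ c < ⊤ ∧ μ' = c • μ := by
  obtain ⟨B, hB, hBcov⟩ := h_cover
  set c := μ' (B 0) / μ (B 0) with hc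
  have h0 := hadm (B 0) (hB 0)
  -- ratio constancy
  have ratio : ∀ D ∈ 𝔅, μ' D = c * μ D := by
    intro D hD
    set E := D ∪ B 0 with hE
    have hEmem : E ∈ 𝔅 := h_union D hD (B 0) (hB 0)
    have hDadm := hadm D hD
    have hEadm := hadm E hEmem
    have h1 : μ D / μ E = μ' D / μ' E := by
      have := hcond E hEmem D (h_meas D hD)
      rwa [Set.inter_eq_self_of_subset_left Set.subset_union_left] at this
    have h2 : μ (B 0) / μ E = μ' (B 0) / μ' E := by
      have := hcond E hEmem (B 0) (h_meas _ (hB 0))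
      rwa [Set.inter_eq_self_of_subset_left Set.subset_union_right] at this
    -- cross-multiply
    have e1 : μ' E * μ D = μ E * μ' D :=
      (ENNReal.div_eq_div_iff hEadm.2.1.ne' hEadm.2.2.ne hEadm.1.1.ne' hEadm.1.2.ne).1 h1
    have e2 : μ' E * μ (B 0) = μ E * μ' (B 0) :=
      (ENNReal.div_eq_div_iff hEadm.2.1.ne' hEadm.2.2.ne hEadm.1.1.ne' hEadm.1.2.ne).1 h2
    have hr : ∀ a b : ℝ≥0∞, μ' E * a = μ E * b → b = (μ' E / μ E) * a := by
      intro a b h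
      rw [← ENNReal.mul_div_right_comm]
      exact (ENNReal.eq_div_iff hEadm.1.1.ne' hEadm.1.2.ne).2 h.symm
    have r1 : μ' D = (μ' E / μ E) * μ D := hr _ _ e1
    have r2 : μ' (B 0) = (μ' E / μ E) * μ (B 0) := hr _ _ e2
    have hcE : c = μ' E / μ E := by
      rw [hc, r2, mul_div_assoc, ENNReal.div_self h0.1.1.ne' h0.1.2.ne, mul_one]
    rw [hcE]; exact r1
  have key : ∀ D ∈ 𝔅, ∀ A : Set X, MeasurableSet A →
      μ' (A ∩ D) = c * μ (A ∩ D) := by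
    intro D hD A hA
    have hDadm := hadm D hD
    have h := hcond D hD A hA
    have e : μ' D * μ (A ∩ D) = μ D * μ' (A ∩ D) :=
      (ENNReal.div_eq_div_iff hDadm.2.1.ne' hDadm.2.2.ne hDadm.1.1.ne' hDadm.1.2.ne).1 h
    rw [ratio D hD] at e
    have : μ' (A ∩ D) = c * μ D * μ (A ∩ D) / μ D :=
      (ENNReal.eq_div_iff hDadm.1.1.ne' hDadm.1.2.ne).2 e.symm
    rwa [mul_right_comm, mul_div_assoc, ENNReal.div_self hDadm.1.1.ne' hDadm.1.2.ne,
      mul_one] at this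
  have hcpos : 0 < c := ENNReal.div_pos h0.2.1.ne' h0.1.2.ne
  have hclt : c < ⊤ := ENNReal.div_lt_top h0.2.2.ne h0.1.1.ne'
  refine ⟨c, hcpos, hclt, ?_⟩
  ext A hA
  have hAcc : ∀ n, Set.accumulate B n ∈ 𝔅 := by
    intro n
    induction n with
    | zero =>
      have : Set.accumulate B 0 = B 0 := by
        ext x; simp [Set.mem_accumulate, Nat.le_zero]
      rw [this]; exact hB 0
    | succ n ih =>
      have : Set.accumulate B (n + 1) = Set.accumulate B n ∪ B (n + 1) := by
        ext x
        simp only [Set.mem_accumulate, Set.mem_union, Nat.le_succ_iff]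
        constructor
        · rintro ⟨y, hy | hy, hxy⟩
          · exact Or.inl ⟨y, hy, hxy⟩
          · subst hy; exact Or.inr hxy
        · rintro (⟨y, hy, hxy⟩ | hx)
          · exact ⟨y, Or.inl hy, hxy⟩
          · exact ⟨n + 1, Or.inr rfl, hx⟩
      rw [this]; exact h_union _ ih _ (hB (n + 1))
  have hU : (⋃ i, A ∩ B i) = A := by
    rw [← Set.inter_iUnion, hBcov, Set.inter_univ]
  have hAccEq : ∀ n, Set.accumulate (fun i => A ∩ B i) n = A ∩ Set.accumulate B n := by
    intro n
    simp [Set.accumulate_def, Set.inter_iUnion]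
  have hμ'A : μ' A = ⨆ n, μ' (A ∩ Set.accumulate B n) := by
    conv_lhs => rw [← hU]
    rw [measure_iUnion_eq_iSup_accumulate]
    exact iSup_congr fun n => by rw [hAccEq]
  have hμA : μ A = ⨆ n, μ (A ∩ Set.accumulate B n) := by
    conv_lhs => rw [← hU]
    rw [measure_iUnion_eq_iSup_accumulate]
    exact iSup_congr fun n => by rw [hAccEq]
  rw [Measure.smul_apply, smul_eq_mul, hμ'A, hμA, ENNReal.mul_iSup]
  exact iSup_congr fun n => key _ (hAcc n) A hA
end

section
/- (Maximality of the generated Renyi space.) Let μ be a nonzero σ-finite measure on (X, F) and let 𝔄 = {A ∈ F : 0 < μ(A) < ∞}. Suppose (X, F, 𝔅, ν) is a Renyi space with 𝔄 ⊆ 𝔅 and ν(A | B) = μ(A ∩ B)/μ(B) for all B ∈ 𝔄 and A ∈ F. Then every B ∈ 𝔅 satisfies 0 < μ(B) < ∞ and ν(A | B) = μ(A ∩ B)/μ(B) for all A ∈ F; in particular 𝔅 = 𝔄, so the Renyi space of elementary conditional probabilities of μ admits no strict extension. -/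
open MeasureTheory
open scoped ENNReal

/-- Maximality of the generated Renyi space: if a Renyi space
extends the Renyi space of elementary conditional probabilities of a nonzero
σ-finite measure `μ` on its full family `𝔄` of admissible sets, then every
bunch member is admissible for `μ` with the elementary conditional law of `μ`;
in particular its bunch equals `𝔄`, so no strict extension exists. -/
theorem stmt_14 {X : Type*} [MeasurableSpace X] (μ : Measure X)
    (hμ : μ ≠ 0) (hsf : SigmaFinite μ) (R : RenyiSpace X)
    (hsub : {A : Set X | MeasurableSet A ∧ 0 < μ A ∧ μ A < ⊤} ⊆ R.bunch)
    (hext : ∀ B ∈ {A : Set X | MeasurableSet A ∧ 0 < μ A ∧ μ A < ⊤},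
      ∀ A : Set X, MeasurableSet A → R.cond B A = μ (A ∩ B) / μ B) :
    (∀ B ∈ R.bunch, (0 < μ B ∧ μ B < ⊤) ∧
      ∀ A : Set X, MeasurableSet A → R.cond B A = μ (A ∩ B) / μ B) ∧
    R.bunch = {A : Set X | MeasurableSet A ∧ 0 < μ A ∧ μ A < ⊤} := by
  haveI := hsf
  set 𝔄 : Set (Set X) := {A : Set X | MeasurableSet A ∧ 0 < μ A ∧ μ A < ⊤} with h𝔄
  -- there is some admissible set E
  have hE : ∃ E, E ∈ 𝔄 := by
    by_contra h
    push_neg at h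
    have hz : ∀ n, μ (spanningSets μ n) = 0 := by
      intro n
      by_contra hn
      exact h _ ⟨measurableSet_spanningSets μ n, pos_iff_ne_zero.mpr hn,
        measure_spanningSets_lt_top μ n⟩
    have : μ Set.univ = 0 := by
      rw [← iUnion_spanningSets μ]
      exact measure_iUnion_null hz
    exact hμ (Measure.measure_univ_eq_zero.mp this)
  obtain ⟨E, hEm, hE0, hEt⟩ := hE
  have key : ∀ B ∈ R.bunch, 0 < μ B ∧ μ B < ⊤ := by
    intro B hB
    have hBm := R.bunch_measurableSet B hB
    have hpos : 0 < μ B := by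
      by_contra h0
      push_neg at h0
      have hB0 : μ B = 0 := le_antisymm h0 zero_le
      have hU : B ∪ E ∈ 𝔄 := by
        refine ⟨hBm.union hEm, lt_of_lt_of_le hE0 (measure_mono Set.subset_union_right), ?_⟩
        calc μ (B ∪ E) ≤ μ B + μ E := measure_union_le _ _
          _ = μ E := by rw [hB0, zero_add]
          _ < ⊤ := hEt
      have hposc := R.pos B hB (B ∪ E) (hsub hU) Set.subset_union_left
      rw [hext _ hU B hBm,
        Set.inter_eq_self_of_subset_left Set.subset_union_left, hB0] at hposc
      simp at hposc
    refine ⟨hpos, ?_⟩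
    by_contra hT
    push_neg at hT
    have hBT : μ B = ⊤ := top_le_iff.mp hT
    set Bn : ℕ → Set X := fun n => B ∩ spanningSets μ n with hBn
    have hmono : Monotone Bn := fun i j h =>
      Set.inter_subset_inter_right _ (monotone_spanningSets μ h)
    have hUn : ⋃ n, Bn n = B := by
      rw [hBn, ← Set.inter_iUnion, iUnion_spanningSets, Set.inter_univ]
    have hmeas : ∀ n, MeasurableSet (Bn n) := fun n =>
      hBm.inter (measurableSet_spanningSets μ n)
    have hfinn : ∀ n, μ (Bn n) < ⊤ := fun n =>
      lt_of_le_of_lt (measure_mono Set.inter_subset_right) (measure_spanningSets_lt_top μ n)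
    have hn0 : ∃ n₀, 0 < μ (Bn n₀) := by
      by_contra h
      push_neg at h
      have : μ B = 0 := by
        rw [← hUn]
        exact measure_iUnion_null fun n => le_antisymm (h n) zero_le
      exact absurd this hpos.ne'
    obtain ⟨n₀, hn₀⟩ := hn0
    have hBn0A : Bn n₀ ∈ 𝔄 := ⟨hmeas n₀, hn₀, hfinn n₀⟩
    set k := R.cond B (Bn n₀) with hk_def
    have hk : 0 < k := R.pos _ (hsub hBn0A) B hB Set.inter_subset_left
    have htend : Filter.Tendsto (fun n => μ (Bn n)) Filter.atTop (nhds ⊤) := by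
      have := tendsto_measure_iUnion_atTop (μ := μ) hmono
      rwa [hUn, hBT] at this
    have hclt : μ (Bn n₀) / k < ⊤ := ENNReal.div_lt_top (hfinn n₀).ne hk.ne'
    have hev : ∀ᶠ n in Filter.atTop, μ (Bn n₀) / k < μ (Bn n) :=
      htend.eventually (lt_mem_nhds hclt)
    obtain ⟨n, hn_ge, hn_lt⟩ := (hev.and (Filter.eventually_ge_atTop n₀)).exists
    have hsubn : Bn n₀ ⊆ Bn n := hmono hn_lt
    have hBnA : Bn n ∈ 𝔄 :=
      ⟨hmeas n, lt_of_lt_of_le hn₀ (measure_mono hsubn), hfinn n⟩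
    -- the Renyi axiom relating ν(·|Bₙ) and ν(·|B)
    have hren := R.renyi (Bn n) (hsub hBnA) B hB Set.inter_subset_left (Bn n₀) (hmeas n₀)
    rw [Set.inter_eq_self_of_subset_left hsubn] at hren
    have hext' := hext _ hBnA (Bn n₀) (hmeas n₀)
    rw [Set.inter_eq_self_of_subset_left hsubn] at hext'
    -- so μ(Bₙ₀)/μ(Bₙ) = k / ν(Bₙ|B) ≥ k
    have hcond_le : R.cond B (Bn n) ≤ 1 := by
      haveI := R.isProbabilityMeasure B hB
      exact prob_le_one
    have hge : k ≤ μ (Bn n₀) / μ (Bn n) := by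
      rw [← hext', hren, ← hk_def]
      calc k = k / 1 := (div_one k).symm
        _ ≤ k / R.cond B (Bn n) := ENNReal.div_le_div_left hcond_le k
    have hlt : μ (Bn n₀) / μ (Bn n) < k := by
      rw [ENNReal.div_lt_iff (Or.inl (lt_of_lt_of_le hn₀ (measure_mono hsubn)).ne')
        (Or.inl (hfinn n).ne)]
      have hk_ne_top : k ≠ ⊤ := by
        haveI := R.isProbabilityMeasure B hB
        exact ne_top_of_le_ne_top ENNReal.one_ne_top prob_le_one
      calc μ (Bn n₀) = k * (μ (Bn n₀) / k) := (ENNReal.mul_div_cancel hk.ne' hk_ne_top).symm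
        _ < k * μ (Bn n) := by
            exact ENNReal.mul_lt_mul_iff_right hk.ne' hk_ne_top |>.mpr hn_ge
    exact absurd (lt_of_le_of_lt hge hlt) (lt_irrefl k)
  have hmem : ∀ B ∈ R.bunch, B ∈ 𝔄 := fun B hB =>
    ⟨R.bunch_measurableSet B hB, (key B hB).1, (key B hB).2⟩
  refine ⟨fun B hB => ⟨key B hB, fun A hA => hext B (hmem B hB) A hA⟩, ?_⟩
  exact le_antisymm (fun B hB => hmem B hB) hsub
end

section
/- (Injectivity of the correspondence between maximal Renyi spaces and conditional measure spaces.) Let μ and ν be nonzero σ-finite measures on a measurable space (X, F) such that {A ∈ F : 0 < μ(A) < ∞} = {A ∈ F : 0 < ν(A) < ∞} and, for every A in this common family and every measurable B, μ(B ∩ A)/μ(A) = ν(B ∩ A)/ν(A). Then ν = c·μ for some c ∈ (0,∞); i.e., two σ-finite measures with the same admissible sets and the same elementary conditional probabilities determine the same conditional measure. -/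
open MeasureTheory
open scoped ENNReal

/-- Injectivity of the correspondence between maximal Renyi
spaces and conditional measure spaces: two nonzero σ-finite measures with the
same admissible sets and the same elementary conditional probabilities are
positive scalar multiples of each other, i.e. they determine the same
conditional measure. -/
theorem stmt_15 {X : Type*} [MeasurableSpace X] (μ ν : Measure X)
    (hμ0 : μ ≠ 0) (hν0 : ν ≠ 0) (hμ : SigmaFinite μ) (hν : SigmaFinite ν)
    (hadm : {A : Set X | MeasurableSet A ∧ 0 < μ A ∧ μ A < ⊤} =
            {A : Set X | MeasurableSet A ∧ 0 < ν A ∧ ν A < ⊤})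
    (hcond : ∀ A ∈ {A : Set X | MeasurableSet A ∧ 0 < μ A ∧ μ A < ⊤},
      ∀ B : Set X, MeasurableSet B → μ (B ∩ A) / μ A = ν (B ∩ A) / ν A) :
    ∃ c : ℝ≥0∞, 0 < c ∧ c < ⊤ ∧ ν = c • μ := by
  -- find an admissible set A₀
  obtain ⟨n₀, hn₀⟩ : ∃ n, μ (spanningSets μ n) ≠ 0 := by
    by_contra h
    push_neg at h
    apply hμ0
    ext s hs
    have : μ Set.univ = 0 := by
      rw [← iUnion_spanningSets μ]
      exact measure_iUnion_null h
    simp [measure_mono_null (Set.subset_univ s) this]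
  set A₀ := spanningSets μ n₀ with hA₀def
  have hA₀ : A₀ ∈ {A : Set X | MeasurableSet A ∧ 0 < μ A ∧ μ A < ⊤} :=
    ⟨measurableSet_spanningSets μ n₀, pos_iff_ne_zero.mpr hn₀,
      measure_spanningSets_lt_top μ n₀⟩
  have hA₀ν : 0 < ν A₀ ∧ ν A₀ < ⊤ := by
    have := hadm ▸ hA₀
    exact ⟨this.2.1, this.2.2⟩
  set c : ℝ≥0∞ := ν A₀ / μ A₀ with hc
  have hcpos : 0 < c := ENNReal.div_pos hA₀ν.1.ne' hA₀.2.2.ne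
  have hctop : c < ⊤ := ENNReal.div_lt_top hA₀ν.2.ne hA₀.2.1.ne'
  -- key: ν E = c * μ E for admissible E
  have key : ∀ E : Set X, MeasurableSet E → 0 < μ E → μ E < ⊤ → ν E = c * μ E := by
    intro E hEm hE0 hEt
    set U := E ∪ A₀ with hU
    have hUm : MeasurableSet U := hEm.union hA₀.1
    have hUμpos : 0 < μ U := lt_of_lt_of_le hE0 (measure_mono Set.subset_union_left)
    have hUμtop : μ U < ⊤ := lt_of_le_of_lt (measure_union_le E A₀)
      (ENNReal.add_lt_top.mpr ⟨hEt, hA₀.2.2⟩)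
    have hUadm : U ∈ {A : Set X | MeasurableSet A ∧ 0 < μ A ∧ μ A < ⊤} :=
      ⟨hUm, hUμpos, hUμtop⟩
    have hUν : 0 < ν U ∧ ν U < ⊤ := by
      have := hadm ▸ hUadm
      exact ⟨this.2.1, this.2.2⟩
    have hE' := hcond U hUadm E hEm
    have hA' := hcond U hUadm A₀ hA₀.1
    rw [Set.inter_eq_left.mpr Set.subset_union_left] at hE'
    rw [Set.inter_eq_left.mpr Set.subset_union_right] at hA'
    -- cross-multiply
    rw [ENNReal.div_eq_div_iff hUν.1.ne' hUν.2.ne hUμpos.ne' hUμtop.ne] at hE' hA'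
    -- hE' : ν U * μ E = μ U * ν E ;  hA' : ν U * μ A₀ = μ U * ν A₀
    have hνE : ν E = ν U * μ E / μ U := by
      rw [ENNReal.eq_div_iff hUμpos.ne' hUμtop.ne, ← hE', mul_comm]
    have hνA : ν A₀ = ν U * μ A₀ / μ U := by
      rw [ENNReal.eq_div_iff hUμpos.ne' hUμtop.ne, ← hA', mul_comm]
    rw [hνE, hc, hνA]
    simp only [div_eq_mul_inv]
    rw [show ν U * μ A₀ * (μ U)⁻¹ * (μ A₀)⁻¹ * μ E
        = ν U * μ E * (μ U)⁻¹ * (μ A₀ * (μ A₀)⁻¹) by ring,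
      ENNReal.mul_inv_cancel hA₀.2.1.ne' hA₀.2.2.ne, mul_one]
  -- null sets of μ are null for ν
  have keynull : ∀ E : Set X, MeasurableSet E → μ E = 0 → ν E = 0 := by
    intro E hEm hE0
    set U := E ∪ A₀ with hU
    have hUm : MeasurableSet U := hEm.union hA₀.1
    have hUμ : μ U = μ A₀ :=
      le_antisymm (le_trans (measure_union_le _ _) (by rw [hE0, zero_add]))
        (measure_mono Set.subset_union_right)
    have hUadm : U ∈ {A : Set X | MeasurableSet A ∧ 0 < μ A ∧ μ A < ⊤} :=
      ⟨hUm, hUμ ▸ hA₀.2.1, hUμ ▸ hA₀.2.2⟩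
    have hUν : 0 < ν U ∧ ν U < ⊤ := by
      have := hadm ▸ hUadm
      exact ⟨this.2.1, this.2.2⟩
    have h := hcond U hUadm E hEm
    rw [Set.inter_eq_left.mpr Set.subset_union_left] at h
    have : μ E / μ U = 0 := by simp [hE0]
    rw [this] at h
    rcases ENNReal.div_eq_zero_iff.mp h.symm with h' | h'
    · exact h'
    · exact absurd h' hUν.2.ne
  -- combine: ν E = c * μ E whenever μ E < ⊤
  have keyall : ∀ E : Set X, MeasurableSet E → μ E < ⊤ → ν E = c * μ E := by
    intro E hEm hEt
    rcases eq_or_lt_of_le (zero_le : (0 : ℝ≥0∞) ≤ μ E) with h0 | h0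
    · rw [keynull E hEm h0.symm, ← h0, mul_zero]
    · exact key E hEm h0 hEt
  refine ⟨c, hcpos, hctop, ?_⟩
  ext s hs
  have hsdecomp : s = ⋃ n, s ∩ disjointed (spanningSets μ) n := by
    rw [← Set.inter_iUnion, iUnion_disjointed, iUnion_spanningSets, Set.inter_univ]
  have hDm : ∀ n, MeasurableSet (disjointed (spanningSets μ) n) :=
    MeasurableSet.disjointed (measurableSet_spanningSets μ)
  have hdisj : Pairwise (Function.onFun Disjoint fun n => s ∩ disjointed (spanningSets μ) n) := by
    intro i j hij
    exact (disjoint_disjointed (spanningSets μ) hij).mono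
      Set.inter_subset_right Set.inter_subset_right
  have hmeas : ∀ n, MeasurableSet (s ∩ disjointed (spanningSets μ) n) :=
    fun n => hs.inter (hDm n)
  calc ν s = ν (⋃ n, s ∩ disjointed (spanningSets μ) n) := by rw [← hsdecomp]
    _ = ∑' n, ν (s ∩ disjointed (spanningSets μ) n) := measure_iUnion hdisj hmeas
    _ = ∑' n, c * μ (s ∩ disjointed (spanningSets μ) n) := by
        refine tsum_congr fun n => keyall _ (hmeas n) ?_
        exact lt_of_le_of_lt (measure_mono (Set.inter_subset_right.trans
          (disjointed_subset _ _))) (measure_spanningSets_lt_top μ n)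
    _ = c * ∑' n, μ (s ∩ disjointed (spanningSets μ) n) := ENNReal.tsum_mul_left
    _ = c * μ (⋃ n, s ∩ disjointed (spanningSets μ) n) := by
        rw [measure_iUnion hdisj hmeas]
    _ = (c • μ) s := by rw [← hsdecomp]; simp
end

section
/- Let 𝔅 denote the family of all finite nonempty unions of open intervals of the form (m/2, 1 + m/2) with m ∈ ℤ. If μ is a σ-finite measure on the real line with its Borel σ-field such that every B ∈ 𝔅 satisfies 0 < μ(B) < ∞ and μ(A ∩ B)/μ(B) = λ(A ∩ B)/λ(B) for all Borel sets A and all B ∈ 𝔅, where λ is Lebesgue measure, then μ = c·λ for some c ∈ (0,∞). Hence the Renyi space of uniform conditional laws on 𝔅 generates the conditional measure given by the equivalence class of Lebesgue measure. -/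
open MeasureTheory
open scoped ENNReal

/-- The bunch of finite nonempty unions of intervals `(m/2, 1 + m/2)`, `m ∈ ℤ`. -/
def halfIntervalBunch : Set (Set ℝ) :=
  {B : Set ℝ | ∃ S : Finset ℤ, S.Nonempty ∧
    B = ⋃ m ∈ S, Set.Ioo ((m : ℝ) / 2) (1 + (m : ℝ) / 2)}

private lemma ennreal_div_cancel {a b d : ℝ≥0∞} (hb0 : b ≠ 0) (hbt : b ≠ ⊤)
    (hab : a / b = d / b) : a = d := by
  have := congrArg (· * b) hab
  simpa [ENNReal.div_mul_cancel hb0 hbt] using this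

private lemma single_mem (m : ℤ) :
    Set.Ioo ((m : ℝ) / 2) (1 + (m : ℝ) / 2) ∈ halfIntervalBunch :=
  ⟨{m}, Finset.singleton_nonempty m, by simp⟩

private lemma vol_single (m : ℤ) :
    volume (Set.Ioo ((m : ℝ) / 2) (1 + (m : ℝ) / 2)) = 1 := by
  rw [Real.volume_Ioo]
  norm_num

/-- If a σ-finite Borel measure `μ` on `ℝ` makes every member of
the bunch `𝔅` of finite nonempty unions of intervals `(m/2, 1 + m/2)`
admissible and has the uniform (Lebesgue) conditional laws on `𝔅`, then
`μ = c • λ` for some `c ∈ (0,∞)`: the Renyi space of uniform conditional laws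
on `𝔅` generates the conditional measure given by the equivalence class of
Lebesgue measure. -/
theorem stmt_16 (μ : Measure ℝ) (hsf : SigmaFinite μ)
    (h : ∀ B ∈ halfIntervalBunch, (0 < μ B ∧ μ B < ⊤) ∧
      ∀ A : Set ℝ, MeasurableSet A →
        μ (A ∩ B) / μ B = volume (A ∩ B) / volume B) :
    ∃ c : ℝ≥0∞, 0 < c ∧ c < ⊤ ∧ μ = c • volume := by
  set I : ℤ → Set ℝ := fun m => Set.Ioo ((m : ℝ) / 2) (1 + (m : ℝ) / 2) with hIdef
  -- consecutive intervals have equal measure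
  have hstep : ∀ m : ℤ, μ (I m) = μ (I (m + 1)) := by
    intro m
    set B : Set ℝ := I m ∪ I (m + 1) with hB
    have hBmem : B ∈ halfIntervalBunch := by
      refine ⟨{m, m + 1}, ⟨m, by simp⟩, ?_⟩
      simp [hB, hIdef, Finset.set_biUnion_insert]
    obtain ⟨⟨hB0, hBt⟩, hcond⟩ := h B hBmem
    have hsub1 : I m ⊆ B := Set.subset_union_left
    have hsub2 : I (m + 1) ⊆ B := Set.subset_union_right
    have h1 := hcond (I m) measurableSet_Ioo
    have h2 := hcond (I (m + 1)) measurableSet_Ioo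
    rw [Set.inter_eq_self_of_subset_left hsub1] at h1
    rw [Set.inter_eq_self_of_subset_left hsub2] at h2
    have hveq : volume (I m) = volume (I (m + 1)) := by
      rw [hIdef]; simp only [vol_single]
    have : μ (I m) / μ B = μ (I (m + 1)) / μ B := by
      rw [h1, h2, hveq]
    exact ennreal_div_cancel hB0.ne' hBt.ne this
  -- hence all intervals have measure c = μ (I 0)
  set c : ℝ≥0∞ := μ (I 0) with hc
  have hconst : ∀ m : ℤ, μ (I m) = c := by
    intro m
    induction m using Int.induction_on with
    | zero => rfl
    | succ k ih => rw [← ih]; exact (hstep k).symm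
    | pred k ih =>
        have hs := hstep (-(k : ℤ) - 1)
        rw [show -(k : ℤ) - 1 + 1 = -k by ring] at hs
        rw [hs, ih]
  have hc0 : c ≠ 0 := (h (I 0) (single_mem 0)).1.1.ne'
  have hct : c ≠ ⊤ := (h (I 0) (single_mem 0)).1.2.ne
  -- μ agrees with c • volume on each I m
  have hkey : ∀ (m : ℤ) (A : Set ℝ), MeasurableSet A →
      μ (A ∩ I m) = c * volume (A ∩ I m) := by
    intro m A hA
    have hcond := (h (I m) (single_mem m)).2 A hA
    rw [hconst m] at hcond
    rw [hIdef] at hcond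
    rw [vol_single m] at hcond
    rw [div_one] at hcond
    have := congrArg (· * c) hcond
    simp only at this
    rw [ENNReal.div_mul_cancel hc0 hct] at this
    rw [this, mul_comm]
  -- integer points are null for both measures
  have hZnull : μ (Set.range (Int.cast : ℤ → ℝ)) = 0 := by
    have hpt : ∀ n : ℤ, μ {(n : ℝ)} = 0 := by
      intro n
      have hsub : ({(n : ℝ)} : Set ℝ) ⊆ I (2 * n - 1) := by
        intro x hx
        simp only [Set.mem_singleton_iff] at hx
        subst hx
        constructor <;> push_cast <;> linarith
      have := hkey (2 * n - 1) {(n : ℝ)} (measurableSet_singleton _)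
      rw [Set.inter_eq_self_of_subset_left hsub] at this
      rw [this]
      simp
    have : Set.range (Int.cast : ℤ → ℝ) = ⋃ n : ℤ, {(n : ℝ)} := by
      ext x; simp
    rw [this]
    exact measure_iUnion_null fun n => hpt n
  -- the open unit intervals (k, k+1) cover ℝ minus integers, disjointly
  have hcover : (Set.range (Int.cast : ℤ → ℝ))ᶜ ⊆ ⋃ k : ℤ, Set.Ioo (k : ℝ) (k + 1) := by
    intro x hx
    simp only [Set.mem_compl_iff, Set.mem_range, not_exists] at hx
    refine Set.mem_iUnion.2 ⟨⌊x⌋, ?_⟩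
    constructor
    · exact lt_of_le_of_ne (Int.floor_le x) fun hxe => hx ⌊x⌋ hxe
    · exact_mod_cast Int.lt_floor_add_one x
  have hdisj : Pairwise (Function.onFun Disjoint fun k : ℤ => Set.Ioo (k : ℝ) (k + 1)) := by
    intro i j hij
    rw [Function.onFun, Set.Ioo_disjoint_Ioo]
    rcases Ne.lt_or_gt hij with hl | hl
    · exact inf_le_of_left_le (le_sup_of_le_right (by exact_mod_cast Int.add_one_le_iff.2 hl))
    · exact inf_le_of_right_le (le_sup_of_le_left (by exact_mod_cast Int.add_one_le_iff.2 hl))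
  have hIoo_eq : ∀ k : ℤ, Set.Ioo ((k : ℝ)) (k + 1) = I (2 * k) := by
    intro k
    rw [hIdef]
    simp only
    congr 1 <;> push_cast <;> ring
  refine ⟨c, pos_iff_ne_zero.2 hc0, lt_top_iff_ne_top.2 hct, ?_⟩
  ext A hA
  -- decompose A
  have key : ∀ (ν : Measure ℝ), ν (Set.range (Int.cast : ℤ → ℝ)) = 0 →
      ν A = ∑' k : ℤ, ν (A ∩ Set.Ioo (k : ℝ) (k + 1)) := by
    intro ν hν
    have hZm : MeasurableSet (Set.range (Int.cast : ℤ → ℝ)) := by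
      have : Set.range (Int.cast : ℤ → ℝ) = ⋃ n : ℤ, {(n : ℝ)} := by ext x; simp
      rw [this]; exact MeasurableSet.iUnion fun n => measurableSet_singleton _
    have hsplit : ν A = ν (A ∩ (Set.range (Int.cast : ℤ → ℝ))ᶜ) := by
      refine le_antisymm ?_ (measure_mono Set.inter_subset_left)
      calc ν A ≤ ν (A ∩ (Set.range (Int.cast : ℤ → ℝ))ᶜ) + ν (Set.range (Int.cast : ℤ → ℝ)) := by
            refine (measure_mono ?_).trans (measure_union_le _ _)
            intro x hx
            by_cases hxz : x ∈ Set.range (Int.cast : ℤ → ℝ)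
            · exact Or.inr hxz
            · exact Or.inl ⟨hx, hxz⟩
        _ = ν (A ∩ (Set.range (Int.cast : ℤ → ℝ))ᶜ) := by rw [hν, add_zero]
    rw [hsplit]
    have hsub : A ∩ (Set.range (Int.cast : ℤ → ℝ))ᶜ = ⋃ k : ℤ, (A ∩ (Set.range (Int.cast : ℤ → ℝ))ᶜ) ∩ Set.Ioo (k : ℝ) (k + 1) := by
      rw [← Set.inter_iUnion]
      refine (Set.inter_eq_self_of_subset_left fun x hx => hcover hx.2).symm
    rw [hsub, measure_iUnion (fun i j hij => ((hdisj hij).mono Set.inter_subset_right Set.inter_subset_right))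
      (fun k => ((hA.inter hZm.compl).inter measurableSet_Ioo))]
    congr 1
    ext k
    congr 1
    ext x
    constructor
    · rintro ⟨⟨hxA, _⟩, hxI⟩; exact ⟨hxA, hxI⟩
    · rintro ⟨hxA, hxI⟩
      refine ⟨⟨hxA, ?_⟩, hxI⟩
      rintro ⟨n, rfl⟩
      rcases hxI with ⟨h1, h2⟩
      have : k < n := by exact_mod_cast h1
      have : n < k + 1 := by exact_mod_cast h2
      omega
  have hvolZ : volume (Set.range (Int.cast : ℤ → ℝ)) = 0 := by
    have : Set.range (Int.cast : ℤ → ℝ) = ⋃ n : ℤ, {(n : ℝ)} := by ext x; simp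
    rw [this]
    exact measure_iUnion_null fun n => measure_singleton _
  rw [key μ hZnull]
  have : (c • volume : Measure ℝ) A = c * volume A := rfl
  rw [this, key volume hvolZ, ← ENNReal.tsum_mul_left]
  congr 1
  ext k
  rw [hIoo_eq k]
  exact hkey (2 * k) A hA
end
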